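/- Let E be a Banach space that is not polynomially Schur, i.e., there exists a polynomially null sequence in E that is not norm null. Then the set of E-valued non-norm-null polynomially null sequences is spaceable in c_0^w(E): there is a closed infinite-dimensional linear subspace of c_0^w(E) all of whose nonzero elements are polynomially null non-norm-null sequences. -/

import Mathlib

open BoundedContinuousFunction Filter

/-- A sequence in a Banach space `E` is polynomially null if `P (x j) → 0` for every
continuous scalar-valued `n`-homogeneous polynomial `P` (`n ≥ 1`), i.e. for the
diagonal restriction of every continuous `n`-linear form. -/
def PolyNull {E : Type*} [NormedAddCommGroup E] [NormedSpace ℝ E] (x : ℕ → E) : Prop :=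
  ∀ (n : ℕ), 1 ≤ n → ∀ M : ContinuousMultilinearMap ℝ (fun _ : Fin n => E) ℝ,
    Tendsto (fun j => M (fun _ => x j)) atTop (nhds 0)

/-- If `E` is not polynomially Schur (there is a polynomially null sequence that is not
norm null), then the set of non-norm-null polynomially null `E`-valued sequences is
spaceable in `c_0^w(E)`: it contains, up to the origin, a closed infinite-dimensional
subspace of `c_0^w(E)` (the range of an injective bounded linear map `T : ℓ∞ → ℓ∞(E)`
which is an isomorphism onto its closed range; polynomially null sequences are in
particular weakly null, so this range lies in `c_0^w(E)`). -/
theorem polyNull_nonNormNull_spaceable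
    {E : Type*} [NormedAddCommGroup E] [NormedSpace ℝ E] [CompleteSpace E]
    (h : ∃ x : ℕ → E, PolyNull x ∧ ¬ Tendsto x atTop (nhds 0)) :
    ∃ T : (ℕ →ᵇ ℝ) →L[ℝ] (ℕ →ᵇ E),
      Function.Injective T ∧
      (∃ c : ℝ, 0 < c ∧ ∀ a, c * ‖a‖ ≤ ‖T a‖) ∧
      IsClosed (Set.range T) ∧
      (∀ a : ℕ →ᵇ ℝ, a ≠ 0 →
        PolyNull (fun j => T a j) ∧ ¬ Tendsto (fun j => T a j) atTop (nhds 0)) := by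
  classical
  obtain ⟨x, hxP, hxN⟩ := h
  -- Find `ε > 0` with `ε ≤ ‖x j‖` frequently.
  have hfreq : ∃ ε > 0, ∃ᶠ j in atTop, ε ≤ ‖x j‖ := by
    by_contra hc
    push_neg at hc
    apply hxN
    rw [NormedAddCommGroup.tendsto_nhds_zero]
    intro ε hε
    have := hc ε hε
    filter_upwards [this] with j hj
    exact hj
  obtain ⟨ε, hε, hfr⟩ := hfreq
  obtain ⟨φ, hφ, hφx⟩ := Filter.extraction_of_frequently_atTop hfr
  -- Normalize the subsequence.
  set y : ℕ → E := fun j => ‖x (φ j)‖⁻¹ • x (φ j) with hy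
  have hxpos : ∀ j, 0 < ‖x (φ j)‖ := fun j => lt_of_lt_of_le hε (hφx j)
  have hy1 : ∀ j, ‖y j‖ = 1 := by
    intro j
    rw [hy]
    simp only [norm_smul, norm_inv, norm_norm]
    exact inv_mul_cancel₀ (hxpos j).ne'
  have hyP : PolyNull y := by
    intro n hn M
    have h1 : Tendsto (fun j => M (fun _ => x (φ j))) atTop (nhds 0) :=
      (hxP n hn M).comp hφ.tendsto_atTop
    rw [tendsto_zero_iff_norm_tendsto_zero]
    have h2 : Tendsto (fun j => ε⁻¹ ^ n * ‖M (fun _ => x (φ j))‖) atTop (nhds 0) := by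
      simpa using (tendsto_zero_iff_norm_tendsto_zero.mp h1).const_mul (ε⁻¹ ^ n)
    refine squeeze_zero (fun j => norm_nonneg _) (fun j => ?_) h2
    have hMy : M (fun _ => y j) = (‖x (φ j)‖⁻¹) ^ n • M (fun _ => x (φ j)) := by
      have := M.map_smul_univ (fun _ : Fin n => ‖x (φ j)‖⁻¹) (fun _ => x (φ j))
      simpa using this
    rw [hMy, smul_eq_mul, norm_mul, norm_pow, norm_inv, norm_norm]
    gcongr
    exact hφx j
  -- The "spreading" map: each coordinate of `a` is used infinitely often.
  set f : ℕ → ℕ := fun j => (Nat.unpair j).1 with hf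
  have hfpair : ∀ i k, f (Nat.pair i k) = i := by intro i k; simp [hf]
  -- Define the linear operator.
  have hbound : ∀ (a : ℕ →ᵇ ℝ) (j : ℕ), ‖a (f j) • y j‖ ≤ ‖a‖ := by
    intro a j
    rw [norm_smul, hy1, mul_one]
    exact a.norm_coe_le_norm _
  set Tfun : (ℕ →ᵇ ℝ) → (ℕ →ᵇ E) := fun a =>
    BoundedContinuousFunction.ofNormedAddCommGroupDiscrete (fun j => a (f j) • y j) ‖a‖
      (hbound a) with hTfun
  have hTapp : ∀ (a : ℕ →ᵇ ℝ) (j : ℕ), Tfun a j = a (f j) • y j := fun a j => rfl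
  have hTnorm : ∀ a, ‖Tfun a‖ = ‖a‖ := by
    intro a
    apply le_antisymm
    · exact (BoundedContinuousFunction.norm_le (norm_nonneg a)).2 fun j => hbound a j
    · refine (BoundedContinuousFunction.norm_le (norm_nonneg _)).2 fun i => ?_
      have : ‖Tfun a (Nat.pair i 0)‖ = ‖a i‖ := by
        rw [hTapp, hfpair, norm_smul, hy1, mul_one]
      rw [← this]
      exact (Tfun a).norm_coe_le_norm _
  set Tlin : (ℕ →ᵇ ℝ) →ₗ[ℝ] (ℕ →ᵇ E) :=
    { toFun := Tfun
      map_add' := by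
        intro a b
        ext j
        simp only [hTapp, BoundedContinuousFunction.coe_add, Pi.add_apply]
        rw [add_smul]
      map_smul' := by
        intro c a
        ext j
        simp only [hTapp, BoundedContinuousFunction.coe_smul, Pi.smul_apply,
          RingHom.id_apply]
        rw [smul_assoc] } with hTlin
  set T : (ℕ →ᵇ ℝ) →L[ℝ] (ℕ →ᵇ E) :=
    LinearMap.mkContinuous Tlin 1 (fun a => by show ‖Tfun a‖ ≤ 1 * ‖a‖; rw [hTnorm, one_mul]) with hT
  have hTapp' : ∀ (a : ℕ →ᵇ ℝ) (j : ℕ), T a j = a (f j) • y j := fun a j => rfl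
  have hTnorm' : ∀ a, ‖T a‖ = ‖a‖ := hTnorm
  refine ⟨T, ?_, ⟨1, one_pos, fun a => by rw [one_mul, hTnorm']⟩, ?_, ?_⟩
  · -- injective
    intro a b hab
    have : ‖a - b‖ = 0 := by
      rw [← hTnorm' (a - b), map_sub, hab, sub_self, norm_zero]
    simpa [sub_eq_zero] using norm_eq_zero.mp this
  · -- closed range
    have hiso : Isometry T :=
      AddMonoidHomClass.isometry_of_norm T hTnorm'
    exact hiso.isClosedEmbedding.isClosed_range
  · intro a ha
    constructor
    · -- PolyNull
      intro n hn M
      have h1 := hyP n hn M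
      rw [tendsto_zero_iff_norm_tendsto_zero]
      have h2 : Tendsto (fun j => ‖a‖ ^ n * ‖M (fun _ => y j)‖) atTop (nhds 0) := by
        simpa using (tendsto_zero_iff_norm_tendsto_zero.mp h1).const_mul (‖a‖ ^ n)
      refine squeeze_zero (fun j => norm_nonneg _) (fun j => ?_) h2
      have hMy : M (fun _ => T a j) = (a (f j)) ^ n • M (fun _ => y j) := by
        have := M.map_smul_univ (fun _ : Fin n => a (f j)) (fun _ => y j)
        simp only [Finset.prod_const, Finset.card_univ, Fintype.card_fin] at this
        rw [← this]
        rfl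
      rw [hMy, smul_eq_mul, norm_mul, norm_pow]
      gcongr
      exact a.norm_coe_le_norm _
    · -- not norm null
      intro htend
      obtain ⟨i, hi⟩ : ∃ i, a i ≠ 0 := by
        by_contra hc
        push_neg at hc
        exact ha (BoundedContinuousFunction.ext fun i => hc i)
      have hδ : 0 < ‖a i‖ := norm_pos_iff.mpr hi
      rw [NormedAddCommGroup.tendsto_nhds_zero] at htend
      obtain ⟨N, hN⟩ := (eventually_atTop.mp (htend _ hδ))
      have hle : N ≤ Nat.pair i N := Nat.right_le_pair i N
      have := hN (Nat.pair i N) hle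
      rw [hTapp', hfpair, norm_smul, hy1, mul_one] at this
      exact lt_irrefl _ this
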